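/- If a windows-scheduling instance (m_c, {α_1,…,α_q}) has density ρ = Σ_{i=1}^q 1/α_i ≤ m_c/2, then it admits a feasible schedule. -/

import Mathlib

namespace WSP15

/-- bit reversal of the low `e` bits of `n` -/
def rev : ℕ → ℕ → ℕ
  | 0, _ => 0
  | e+1, n => (n % 2) * 2^e + rev e (n / 2)

lemma rev_lt (e n : ℕ) : rev e n < 2^e := by
  induction e generalizing n with
  | zero => simp [rev]
  | succ e ih =>
    have h := ih (n / 2)
    have h2 : n % 2 ≤ 1 := Nat.le_of_lt_succ (Nat.mod_lt _ (by norm_num))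
    have h3 : (n % 2) * 2^e ≤ 2^e := by
      calc (n % 2) * 2^e ≤ 1 * 2^e := Nat.mul_le_mul_right _ h2
      _ = 2^e := one_mul _
    simp only [rev, pow_succ]
    omega

lemma rev_mod (e : ℕ) : ∀ f n : ℕ, f ≤ e → rev e n % 2^f = rev f (n / 2^(e-f)) := by
  induction e with
  | zero => intro f n hf; interval_cases f; simp [rev]
  | succ e ih =>
    intro f n hf
    rcases eq_or_lt_of_le hf with h | h
    · subst h
      rw [Nat.mod_eq_of_lt (rev_lt _ _), Nat.sub_self, pow_zero, Nat.div_one]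
    · have hf' : f ≤ e := Nat.lt_succ_iff.mp h
      have hd : 2^f ∣ (n % 2) * 2^e := Dvd.dvd.mul_left (pow_dvd_pow 2 hf') _
      simp only [rev]
      have hz : (n % 2) * 2^e % 2^f = 0 := Nat.mod_eq_zero_of_dvd hd
      rw [Nat.add_mod, hz, zero_add, Nat.mod_mod_of_dvd _ dvd_rfl, ih f (n/2) hf',
        Nat.div_div_eq_div_mul]
      have h2 : 2 * 2^(e-f) = 2^(e+1-f) := by rw [← pow_succ']; congr 1; omega
      rw [h2]

lemma rev_inj (e : ℕ) {n m : ℕ} (hn : n < 2^e) (hm : m < 2^e) (h : rev e n = rev e m) :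
    n = m := by
  induction e generalizing n m with
  | zero => omega
  | succ e ih =>
    simp only [rev] at h
    have h1 := rev_lt e (n / 2)
    have h2 := rev_lt e (m / 2)
    have hb : n % 2 = m % 2 ∧ rev e (n / 2) = rev e (m / 2) := by
      have hn2 : n % 2 ≤ 1 := by omega
      have hm2 : m % 2 ≤ 1 := by omega
      interval_cases hh : (n % 2) <;> interval_cases hh2 : (m % 2) <;> simp_all <;> omega
    have := ih (n := n / 2) (m := m / 2) (by rw [pow_succ] at hn; omega)
      (by rw [pow_succ] at hm; omega) hb.2
    omega

section Pack

variable {q : ℕ} (b : Fin q → ℕ)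

/-- the common exponent -/
def Ebd : ℕ := Finset.univ.sup b
/-- the size of item `k` -/
def sz (k : Fin q) : ℕ := 2 ^ (Ebd b - b k)
/-- prefix sums of sizes -/
def pre (k : Fin q) : ℕ := ∑ j ∈ Finset.Iio k, sz b j
/-- the channel of item `k` -/
def ch (k : Fin q) : ℕ := pre b k / 2 ^ Ebd b
/-- the dyadic-interval index of item `k` within its channel -/
def nidx (k : Fin q) : ℕ := (pre b k % 2 ^ Ebd b) / sz b k
/-- the scheduling residue of item `k` -/
def res (k : Fin q) : ℕ := rev (b k) (nidx b k)

lemma b_le (k : Fin q) : b k ≤ Ebd b := Finset.le_sup (Finset.mem_univ k)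

lemma sz_pos (k : Fin q) : 0 < sz b k := Nat.pow_pos (by norm_num)

lemma sz_mul (k : Fin q) : sz b k * 2 ^ (b k) = 2 ^ Ebd b := by
  rw [sz, ← pow_add]; congr 1; have := b_le b k; omega

lemma sz_dvd_N (k : Fin q) : sz b k ∣ 2 ^ Ebd b := pow_dvd_pow 2 (Nat.sub_le _ _)

lemma sz_dvd (hmono : Monotone b) {j k : Fin q} (h : j ≤ k) : sz b k ∣ sz b j :=
  pow_dvd_pow 2 (by have := hmono h; have := b_le b j; have := b_le b k; omega)

lemma sz_dvd_pre (hmono : Monotone b) (k : Fin q) : sz b k ∣ pre b k :=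
  Finset.dvd_sum fun j hj => sz_dvd b hmono (le_of_lt (Finset.mem_Iio.mp hj))

lemma pre_decomp (hmono : Monotone b) (k : Fin q) :
    pre b k = ch b k * 2 ^ Ebd b + sz b k * nidx b k := by
  have hdvd : sz b k ∣ pre b k % 2 ^ Ebd b :=
    (Nat.dvd_mod_iff (sz_dvd_N b k)).mpr (sz_dvd_pre b hmono k)
  have h1 : sz b k * nidx b k = pre b k % 2 ^ Ebd b := Nat.mul_div_cancel' hdvd
  rw [ch, h1, mul_comm]
  exact (Nat.div_add_mod _ _).symm

lemma nidx_lt (k : Fin q) : nidx b k < 2 ^ (b k) := by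
  rw [nidx, Nat.div_lt_iff_lt_mul (sz_pos b k), mul_comm, sz_mul]
  exact Nat.mod_lt _ (Nat.pow_pos (by norm_num))

lemma pre_step {j k : Fin q} (h : j < k) : pre b j + sz b j ≤ pre b k := by
  have h1 : pre b j + sz b j = ∑ x ∈ Finset.Iic j, sz b x := by
    rw [pre, ← Finset.Iio_insert, Finset.sum_insert (by simp), add_comm]
  rw [h1, pre]
  refine Finset.sum_le_sum_of_subset fun x hx => ?_
  rw [Finset.mem_Iic] at hx
  rw [Finset.mem_Iio]
  exact hx.trans_lt h

lemma sched_disj (hmono : Monotone b) {j k : Fin q} (hjk : j < k) {t : ℕ}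
    (hc : ch b j = ch b k)
    (hj : t % 2 ^ (b j) = res b j) (hk : t % 2 ^ (b k) = res b k) : False := by
  have hbj : b j ≤ b k := hmono hjk.le
  have h1 : res b k % 2 ^ (b j) = res b j := by
    rw [← hj, ← hk, Nat.mod_mod_of_dvd _ (pow_dvd_pow 2 hbj)]
  have h2 : res b k % 2 ^ (b j) = rev (b j) (nidx b k / 2 ^ (b k - b j)) :=
    rev_mod (b k) (b j) (nidx b k) hbj
  have hpow : 2 ^ (b k) = 2 ^ (b j) * 2 ^ (b k - b j) := by rw [← pow_add]; congr 1; omega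
  have hq1 : nidx b k / 2 ^ (b k - b j) < 2 ^ (b j) := by
    rw [Nat.div_lt_iff_lt_mul (Nat.pow_pos (by norm_num)), ← hpow]
    exact nidx_lt b k
  have h3 : res b j = rev (b j) (nidx b k / 2 ^ (b k - b j)) := by rw [← h1, h2]
  have heq : nidx b j = nidx b k / 2 ^ (b k - b j) :=
    rev_inj (b j) (nidx_lt b j) hq1 h3
  have hlo : nidx b j * 2 ^ (b k - b j) ≤ nidx b k := by
    rw [heq]; exact Nat.div_mul_le_self _ _
  have hup : nidx b k < (nidx b j + 1) * 2 ^ (b k - b j) := by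
    rw [heq]
    calc nidx b k
        = 2 ^ (b k - b j) * (nidx b k / 2 ^ (b k - b j)) + nidx b k % 2 ^ (b k - b j) :=
          (Nat.div_add_mod _ _).symm
      _ < 2 ^ (b k - b j) * (nidx b k / 2 ^ (b k - b j)) + 2 ^ (b k - b j) :=
          Nat.add_lt_add_left (Nat.mod_lt _ (Nat.pow_pos (by norm_num))) _
      _ = (nidx b k / 2 ^ (b k - b j) + 1) * 2 ^ (b k - b j) := by ring
  have hdj := pre_decomp b hmono j
  have hdk := pre_decomp b hmono k
  have hsz : sz b j = sz b k * 2 ^ (b k - b j) := by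
    rw [sz, sz, ← pow_add]; congr 1; have := b_le b k; omega
  have hP := pre_step b hjk
  have key : pre b k < pre b j + sz b j := by
    rw [hdj, hdk, hc, hsz]
    have hc1 : sz b k * nidx b k < sz b k * ((nidx b j + 1) * 2 ^ (b k - b j)) :=
      mul_lt_mul_of_pos_left hup (sz_pos b k)
    have hc2 : sz b k * ((nidx b j + 1) * 2 ^ (b k - b j)) =
        sz b k * 2 ^ (b k - b j) * nidx b j + sz b k * 2 ^ (b k - b j) := by ring
    linarith
  omega

lemma sched_unique (hmono : Monotone b) {j k : Fin q} {t : ℕ}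
    (hc : ch b j = ch b k)
    (hj : t % 2 ^ (b j) = res b j) (hk : t % 2 ^ (b k) = res b k) : j = k := by
  rcases lt_trichotomy j k with h | h | h
  · exact (sched_disj b hmono h hc hj hk).elim
  · exact h
  · exact (sched_disj b hmono h hc.symm hk hj).elim

end Pack



end WSP15

open WSP15

/-- A windows schedule `W` over `m` channels is feasible for the window sizes `α`
if every symbol `i` occurs in one of the tuples in every window of `α i`
consecutive time slots. -/
def WSPFeasible {q m : ℕ} (α : Fin q → ℕ) (W : ℕ → Fin m → Fin q) : Prop :=
  ∀ i : Fin q, ∀ t : ℕ, ∃ t' k, t ≤ t' ∧ t' < t + α i ∧ W t' k = i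

/-- If a windows-scheduling instance has density `ρ ≤ m_c / 2`, it admits a
feasible schedule. -/
theorem stmt_15 {q mc : ℕ} (hq : 0 < q) (α : Fin q → ℕ) (hα : ∀ i, 1 ≤ α i)
    (hmc : 1 ≤ mc)
    (hρ : ∑ i : Fin q, (1 : ℝ) / (α i : ℝ) ≤ (mc : ℝ) / 2) :
    ∃ W : ℕ → Fin mc → Fin q, WSPFeasible α W := by
  classical
  have hq' : Nonempty (Fin q) := ⟨⟨0, hq⟩⟩
  set e : Fin q → ℕ := fun i => Nat.log 2 (α i) with he
  set σ : Equiv.Perm (Fin q) := Tuple.sort e with hσ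
  set b : Fin q → ℕ := e ∘ ⇑σ with hb
  have hmono : Monotone b := Tuple.monotone_sort e
  set N : ℕ := 2 ^ Ebd b with hN
  have hNpos : 0 < N := Nat.pow_pos (by norm_num)
  -- total size bound
  have htot : ∑ k : Fin q, sz b k < mc * N := by
    have hreal : (∑ k : Fin q, (sz b k : ℝ)) < (mc : ℝ) * (N : ℝ) := by
      have hstep : ∀ k ∈ Finset.univ, (sz b k : ℝ) < 2 ^ (Ebd b + 1) * (1 / (α (σ k) : ℝ)) := by
        intro k _
        have hb0 : (0 : ℝ) < (α (σ k) : ℝ) := by exact_mod_cast hα (σ k)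
        have hαlt : ((α (σ k) : ℕ) : ℝ) < 2 ^ (b k + 1) := by
          exact_mod_cast Nat.lt_pow_succ_log_self (by norm_num) (α (σ k))
        have hszr : ((sz b k : ℕ) : ℝ) * 2 ^ (b k + 1) = 2 ^ (Ebd b + 1) := by
          rw [sz]
          push_cast
          rw [← pow_add]
          congr 1
          have := b_le b k
          omega
        have hszpos : (0 : ℝ) < (sz b k : ℝ) := by exact_mod_cast sz_pos b k
        rw [mul_one_div, lt_div_iff₀ hb0]
        nlinarith
      calc (∑ k : Fin q, (sz b k : ℝ))
          < ∑ k : Fin q, 2 ^ (Ebd b + 1) * (1 / (α (σ k) : ℝ)) :=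
            Finset.sum_lt_sum_of_nonempty Finset.univ_nonempty hstep
        _ = 2 ^ (Ebd b + 1) * ∑ k : Fin q, (1 / (α (σ k) : ℝ)) := by
            rw [Finset.mul_sum]
        _ = 2 ^ (Ebd b + 1) * ∑ i : Fin q, (1 / (α i : ℝ)) := by
            rw [Equiv.sum_comp σ (fun i => 1 / (α i : ℝ))]
        _ ≤ 2 ^ (Ebd b + 1) * ((mc : ℝ) / 2) := by
            apply mul_le_mul_of_nonneg_left hρ (by positivity)
        _ = (mc : ℝ) * (N : ℝ) := by
            rw [hN]
            push_cast
            ring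
    exact_mod_cast hreal
  have hch : ∀ k : Fin q, ch b k < mc := by
    intro k
    rw [ch, Nat.div_lt_iff_lt_mul hNpos]
    calc pre b k ≤ ∑ j : Fin q, sz b j :=
          Finset.sum_le_sum_of_subset (Finset.subset_univ _)
      _ < mc * N := htot
  -- the schedule
  refine ⟨fun t c =>
    if h : ∃ k : Fin q, ch b k = (c : ℕ) ∧ t % 2 ^ (b k) = res b k then σ h.choose
    else σ ⟨0, hq⟩, ?_⟩
  intro i t
  set k : Fin q := σ.symm i with hk
  have hbk : b k = Nat.log 2 (α i) := by
    simp [hb, he, hk]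
  have hM1 : 0 < 2 ^ (b k) := Nat.pow_pos (by norm_num)
  have hMα : 2 ^ (b k) ≤ α i := by
    rw [hbk]
    exact Nat.pow_log_le_self 2 (by have := hα i; omega)
  have hres : res b k < 2 ^ (b k) := rev_lt _ _
  set a : ℕ := 2 ^ (b k) * (t / 2 ^ (b k)) with ha
  have hdm : a + t % 2 ^ (b k) = t := Nat.div_add_mod t _
  have hrM : t % 2 ^ (b k) < 2 ^ (b k) := Nat.mod_lt _ hM1
  set t' : ℕ := if t % 2 ^ (b k) ≤ res b k then a + res b k else a + 2 ^ (b k) + res b k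
    with ht'
  have ht'mod : t' % 2 ^ (b k) = res b k := by
    rw [ht']
    split_ifs
    · rw [ha, Nat.mul_add_mod, Nat.mod_eq_of_lt hres]
    · have h2 : a + 2 ^ (b k) + res b k = 2 ^ (b k) * (t / 2 ^ (b k) + 1) + res b k := by
        rw [ha]; ring
      rw [h2, Nat.mul_add_mod, Nat.mod_eq_of_lt hres]
  have ht1 : t ≤ t' := by rw [ht']; split_ifs <;> omega
  have ht2 : t' < t + α i := by
    have : t' < t + 2 ^ (b k) := by rw [ht']; split_ifs <;> omega
    omega
  refine ⟨t', ⟨ch b k, hch k⟩, ht1, ht2, ?_⟩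
  have hex : ∃ k' : Fin q, ch b k' = ((⟨ch b k, hch k⟩ : Fin mc) : ℕ) ∧
      t' % 2 ^ (b k') = res b k' := ⟨k, rfl, ht'mod⟩
  beta_reduce
  rw [dif_pos hex]
  obtain ⟨hc1, hc2⟩ := hex.choose_spec
  have : hex.choose = k := sched_unique b hmono hc1 hc2 ht'mod
  rw [this, hk, Equiv.apply_symm_apply]
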